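/- Let f ∈ ℚ[x₁,…,xₙ]. If f is a sum of two squares in the rational function field ℚ(x₁,…,xₙ), i.e. f = r₁² + r₂² for some rational functions r₁, r₂ ∈ ℚ(x₁,…,xₙ), then f is a sum of two squares in ℚ[x₁,…,xₙ], i.e. there exist q₁, q₂ ∈ ℚ[x₁,…,xₙ] with f = q₁² + q₂². -/

import Mathlib

open Polynomial

/-- The Gaussian rationals, modeled as `ℚ[X]/(X²+1)`. -/
abbrev Kq : Type := AdjoinRoot (X ^ 2 + 1 : ℚ[X])

lemma Kq.natDegree_poly : (X ^ 2 + 1 : ℚ[X]).natDegree = 2 := by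
  compute_degree!

lemma Kq.irreducible_poly : Irreducible (X ^ 2 + 1 : ℚ[X]) := by
  rw [Polynomial.irreducible_iff_roots_eq_zero_of_degree_le_three
    (by rw [Kq.natDegree_poly]) (by rw [Kq.natDegree_poly]; omega)]
  rw [Multiset.eq_zero_iff_forall_notMem]
  intro r hr
  have h0 : (X ^ 2 + 1 : ℚ[X]) ≠ 0 := by
    intro h
    have h2 := Kq.natDegree_poly
    rw [h] at h2
    simp at h2
  rw [mem_roots h0] at hr
  simp only [IsRoot, eval_add, eval_pow, eval_X, eval_one] at hr
  nlinarith [sq_nonneg r]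

instance : Fact (Irreducible (X ^ 2 + 1 : ℚ[X])) := ⟨Kq.irreducible_poly⟩

noncomputable example : Field Kq := inferInstance

noncomputable def Kq.i : Kq := AdjoinRoot.root _

lemma Kq.i_sq : Kq.i ^ 2 = -1 := by
  have h : (AdjoinRoot.mk (X ^ 2 + 1 : ℚ[X])) (X ^ 2 + 1) = 0 := AdjoinRoot.mk_self
  rw [map_add, map_pow, AdjoinRoot.mk_X, map_one] at h
  unfold Kq.i
  linear_combination h

lemma Kq.exists_decomp (z : Kq) :
    ∃ a b : ℚ, z = algebraMap ℚ Kq a + algebraMap ℚ Kq b * Kq.i := by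
  obtain ⟨p, rfl⟩ := AdjoinRoot.mk_surjective (g := (X ^ 2 + 1 : ℚ[X])) z
  have hm : (X ^ 2 + 1 : ℚ[X]).Monic := by monicity!
  set g : ℚ[X] := X ^ 2 + 1
  have hrem : AdjoinRoot.mk g (p %ₘ g) = AdjoinRoot.mk g p := by
    conv_rhs => rw [← Polynomial.modByMonic_add_div p g]
    rw [map_add, map_mul, AdjoinRoot.mk_self, zero_mul, add_zero]
  have hdeg : (p %ₘ g).natDegree ≤ 1 := by
    rcases eq_or_ne (p %ₘ g) 0 with h | h
    · simp [h]
    · have := Polynomial.degree_modByMonic_lt p hm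
      have hg2 : g.degree = ((2 : ℕ) : WithBot ℕ) := by
        rw [Polynomial.degree_eq_natDegree hm.ne_zero, Kq.natDegree_poly]
      rw [hg2] at this
      have h2 := (Polynomial.natDegree_lt_iff_degree_lt h).mpr this
      omega
  refine ⟨(p %ₘ g).coeff 0, (p %ₘ g).coeff 1, ?_⟩
  rw [← hrem]
  conv_lhs => rw [Polynomial.eq_X_add_C_of_natDegree_le_one hdeg]
  rw [map_add, map_mul, AdjoinRoot.mk_X, AdjoinRoot.mk_C, AdjoinRoot.mk_C,
    ← AdjoinRoot.algebraMap_eq]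
  unfold Kq.i
  exact add_comm _ _

lemma Kq.decomp_eq_zero {a b : ℚ}
    (h : algebraMap ℚ Kq a + algebraMap ℚ Kq b * Kq.i = 0) : a = 0 ∧ b = 0 := by
  have hinj : Function.Injective (algebraMap ℚ Kq) := (algebraMap ℚ Kq).injective
  rcases eq_or_ne b 0 with hb | hb
  · subst hb
    simp only [map_zero, zero_mul, add_zero] at h
    exact ⟨hinj (by simpa using h), rfl⟩
  · exfalso
    have hbK : algebraMap ℚ Kq b ≠ 0 := fun hc => hb (hinj (by simpa using hc))
    have hb' : algebraMap ℚ Kq b * Kq.i = algebraMap ℚ Kq (-a) := by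
      rw [map_neg]
      linear_combination h
    have hi : Kq.i = algebraMap ℚ Kq (-a / b) := by
      rw [map_div₀, eq_div_iff hbK, mul_comm, hb']
    have : (-1 : Kq) = algebraMap ℚ Kq ((-a / b) ^ 2) := by
      rw [map_pow, ← hi, Kq.i_sq]
    have h2 : ((-a / b) ^ 2 : ℚ) = -1 := by
      apply hinj
      rw [← this, map_neg, map_one]
    nlinarith [sq_nonneg (-a / b)]

lemma Kq.conj_aux : Polynomial.aeval (-Kq.i) (X ^ 2 + 1 : ℚ[X]) = 0 := by
  rw [map_add, map_pow, Polynomial.aeval_X, map_one, neg_sq, Kq.i_sq]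
  ring

noncomputable def Kq.conj : Kq →ₐ[ℚ] Kq :=
  AdjoinRoot.liftAlgHom _ (Algebra.ofId ℚ Kq) (-Kq.i) Kq.conj_aux

@[simp] lemma Kq.conj_i : Kq.conj Kq.i = -Kq.i := by
  have h := AdjoinRoot.liftAlgHom_root (X ^ 2 + 1 : ℚ[X]) (Algebra.ofId ℚ Kq) (-Kq.i) Kq.conj_aux
  exact h

@[simp] lemma Kq.conj_algebraMap (a : ℚ) : Kq.conj (algebraMap ℚ Kq a) = algebraMap ℚ Kq a :=
  Kq.conj.commutes a

lemma Kq.conj_conj (z : Kq) : Kq.conj (Kq.conj z) = z := by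
  obtain ⟨a, b, rfl⟩ := Kq.exists_decomp z
  simp [map_add, map_mul]

noncomputable def Kq.conjE : Kq ≃ₐ[ℚ] Kq :=
  AlgEquiv.ofAlgHom Kq.conj Kq.conj (AlgHom.ext Kq.conj_conj) (AlgHom.ext Kq.conj_conj)

open MvPolynomial

noncomputable def iotaS (n : ℕ) : MvPolynomial (Fin n) ℚ →+* MvPolynomial (Fin n) Kq :=
  MvPolynomial.map (algebraMap ℚ Kq)

noncomputable def sigmaS (n : ℕ) : MvPolynomial (Fin n) Kq →+* MvPolynomial (Fin n) Kq :=
  MvPolynomial.map Kq.conj.toRingHom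

noncomputable def JS (n : ℕ) : MvPolynomial (Fin n) Kq := MvPolynomial.C Kq.i

noncomputable instance instDecompS (n : ℕ) : DecompositionMonoid (MvPolynomial (Fin n) Kq) :=
  UniqueFactorizationMonoid.instDecompositionMonoid

variable {n : ℕ}

lemma iotaS_C (a : ℚ) : iotaS n (MvPolynomial.C a) = MvPolynomial.C (algebraMap ℚ Kq a) :=
  MvPolynomial.map_C _ _

lemma iotaS_X (j : Fin n) : iotaS n (MvPolynomial.X j) = MvPolynomial.X j :=
  MvPolynomial.map_X _ _

lemma JS_sq : JS n ^ 2 = -1 := by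
  rw [JS, ← map_pow, Kq.i_sq, map_neg, map_one]

lemma sigmaS_iota (x : MvPolynomial (Fin n) ℚ) : sigmaS n (iotaS n x) = iotaS n x := by
  rw [sigmaS, iotaS, MvPolynomial.map_map]
  have h : Kq.conj.toRingHom.comp (algebraMap ℚ Kq) = algebraMap ℚ Kq :=
    RingHom.ext fun a => Kq.conj_algebraMap a
  rw [h]

lemma sigmaS_sigmaS (s : MvPolynomial (Fin n) Kq) : sigmaS n (sigmaS n s) = s := by
  rw [sigmaS, MvPolynomial.map_map]
  have : (Kq.conj.toRingHom.comp Kq.conj.toRingHom) = RingHom.id Kq :=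
    RingHom.ext Kq.conj_conj
  rw [this, MvPolynomial.map_id]

lemma sigmaS_J : sigmaS n (JS n) = -JS n := by
  rw [sigmaS, JS, MvPolynomial.map_C]
  simp

lemma iotaS_injective : Function.Injective (iotaS n) :=
  MvPolynomial.map_injective _ (algebraMap ℚ Kq).injective

lemma iotaS_ne_zero {x : MvPolynomial (Fin n) ℚ} (hx : x ≠ 0) : iotaS n x ≠ 0 := by
  intro h
  exact hx (iotaS_injective (by rw [h, map_zero]))

/-- Every element of `ℚ(i)[x̄]` decomposes as `A + i·B` with `A B ∈ ℚ[x̄]`. -/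
lemma S_exists_decomp (s : MvPolynomial (Fin n) Kq) :
    ∃ A B : MvPolynomial (Fin n) ℚ, s = iotaS n A + JS n * iotaS n B := by
  induction s using MvPolynomial.induction_on with
  | C a =>
    obtain ⟨x, y, hxy⟩ := Kq.exists_decomp a
    refine ⟨MvPolynomial.C x, MvPolynomial.C y, ?_⟩
    rw [hxy, iotaS_C, iotaS_C, JS, map_add, map_mul]
    ring
  | add p q hp hq =>
    obtain ⟨A₁, B₁, h₁⟩ := hp
    obtain ⟨A₂, B₂, h₂⟩ := hq
    exact ⟨A₁ + A₂, B₁ + B₂, by rw [h₁, h₂, map_add, map_add]; ring⟩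
  | mul_X p j hp =>
    obtain ⟨A, B, hAB⟩ := hp
    refine ⟨A * MvPolynomial.X j, B * MvPolynomial.X j, ?_⟩
    rw [hAB, RingHom.map_mul, RingHom.map_mul, iotaS_X]
    ring

lemma S_decomp_zero {A B : MvPolynomial (Fin n) ℚ}
    (h : iotaS n A + JS n * iotaS n B = 0) : A = 0 ∧ B = 0 := by
  have key : ∀ m : (Fin n) →₀ ℕ, A.coeff m = 0 ∧ B.coeff m = 0 := by
    intro m
    have hc := congrArg (MvPolynomial.coeff m) h
    rw [MvPolynomial.coeff_add, MvPolynomial.coeff_zero, JS,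
      MvPolynomial.coeff_C_mul, iotaS, MvPolynomial.coeff_map, MvPolynomial.coeff_map] at hc
    apply Kq.decomp_eq_zero
    rw [mul_comm (algebraMap ℚ Kq (B.coeff m)) Kq.i]
    exact hc
  exact ⟨MvPolynomial.ext _ _ fun m => by rw [(key m).1, MvPolynomial.coeff_zero],
    MvPolynomial.ext _ _ fun m => by rw [(key m).2, MvPolynomial.coeff_zero]⟩

/-- `ι` reflects divisibility. -/
lemma iotaS_dvd_reflect {x y : MvPolynomial (Fin n) ℚ} (h : iotaS n x ∣ iotaS n y) : x ∣ y := by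
  obtain ⟨w, hw⟩ := h
  obtain ⟨A, B, rfl⟩ := S_exists_decomp w
  have h0 : iotaS n (x * A - y) + JS n * iotaS n (x * B) = 0 := by
    rw [map_sub, map_mul, map_mul]
    linear_combination -hw
  obtain ⟨h1, -⟩ := S_decomp_zero h0
  exact ⟨A, (sub_eq_zero.mp h1).symm⟩

lemma isUnit_of_iotaS {x : MvPolynomial (Fin n) ℚ} (h : IsUnit (iotaS n x)) : IsUnit x := by
  rw [isUnit_iff_dvd_one] at h ⊢
  exact iotaS_dvd_reflect (by rwa [map_one])

lemma norm_of_decomp (A B : MvPolynomial (Fin n) ℚ) :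
    (iotaS n A + JS n * iotaS n B) * sigmaS n (iotaS n A + JS n * iotaS n B)
      = iotaS n (A ^ 2 + B ^ 2) := by
  rw [RingHom.map_add, RingHom.map_mul, sigmaS_J, sigmaS_iota, sigmaS_iota,
    RingHom.map_add, RingHom.map_pow, RingHom.map_pow]
  linear_combination (-(iotaS n B ^ 2)) * (JS_sq (n := n))

lemma norm_decomp (s : MvPolynomial (Fin n) Kq) :
    ∃ A B : MvPolynomial (Fin n) ℚ,
      s = iotaS n A + JS n * iotaS n B ∧ s * sigmaS n s = iotaS n (A ^ 2 + B ^ 2) := by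
  obtain ⟨A, B, h⟩ := S_exists_decomp s
  exact ⟨A, B, h, by rw [h]; exact norm_of_decomp A B⟩

set_option synthInstance.maxHeartbeats 1000000 in
set_option maxHeartbeats 1000000 in
/-- Core step: if `z·σz = ι s · (ι p)²` with `p` prime, then `ι s` is itself a norm. -/
lemma core_step {p : MvPolynomial (Fin n) ℚ} (hp : Prime p)
    (z : MvPolynomial (Fin n) Kq) (s : MvPolynomial (Fin n) ℚ)
    (h : z * sigmaS n z = iotaS n s * iotaS n p ^ 2) :
    ∃ y, y * sigmaS n y = iotaS n s := by
  have hP0 : iotaS n p ≠ 0 := iotaS_ne_zero hp.ne_zero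
  have hPnu : ¬ IsUnit (iotaS n p) := fun hu => hp.not_unit (isUnit_of_iotaS hu)
  obtain ⟨ζ, hζirr, hζdvd⟩ := WfDvdMonoid.exists_irreducible_factor hPnu hP0
  have hζ : Prime ζ := hζirr.prime
  obtain ⟨A, B, hζdec, hζN⟩ := norm_decomp ζ
  set m : MvPolynomial (Fin n) ℚ := A ^ 2 + B ^ 2 with hm
  obtain ⟨η, hη⟩ := hζdvd
  have hζP : ζ ∣ iotaS n p := ⟨η, hη⟩
  obtain ⟨E1, E2, hηdec, hηN⟩ := norm_decomp η
  set e : MvPolynomial (Fin n) ℚ := E1 ^ 2 + E2 ^ 2 with he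
  have e2 : p ^ 2 = m * e := by
    apply iotaS_injective
    rw [RingHom.map_pow, RingHom.map_mul, ← hζN, ← hηN]
    calc (iotaS n p) ^ 2 = iotaS n p * sigmaS n (iotaS n p) := by rw [sigmaS_iota]; ring
      _ = (ζ * η) * (sigmaS n ζ * sigmaS n η) := by rw [hη, RingHom.map_mul]
      _ = ζ * sigmaS n ζ * (η * sigmaS n η) := by ring
  have hmp2 : m ∣ p ^ 2 := ⟨e, e2⟩
  have hσζ0 : sigmaS n ζ ≠ 0 := by
    intro h0
    apply hζ.ne_zero
    rw [← sigmaS_sigmaS (n := n) ζ, h0, map_zero]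
  have hm0 : m ≠ 0 := by
    intro h0
    have h1 : ζ * sigmaS n ζ = 0 := by rw [hζN, h0, map_zero]
    rcases mul_eq_zero.mp h1 with h2 | h2
    · exact hζ.ne_zero h2
    · exact hσζ0 h2
  have hmnu : ¬ IsUnit m := by
    intro hu
    exact hζ.not_unit (isUnit_of_dvd_unit ⟨sigmaS n ζ, hζN.symm⟩ (hu.map (iotaS n)))
  have hpm : p ∣ m := by
    by_contra hpm
    obtain ⟨q, hqirr, hqm⟩ := WfDvdMonoid.exists_irreducible_factor hmnu hm0
    have hq : Prime q := hqirr.prime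
    have hqp : q ∣ p := by
      have h2 : q ∣ p * p := by
        have := hqm.trans hmp2
        rwa [sq] at this
      rcases hq.2.2 p p h2 with h3 | h3 <;> exact h3
    obtain ⟨c, hc⟩ := hqp
    rcases hp.irreducible.isUnit_or_isUnit hc with h1 | h1
    · exact hqirr.not_isUnit h1
    · obtain ⟨cu, hcu⟩ := h1
      apply hpm
      refine dvd_trans ⟨(cu⁻¹ : _), ?_⟩ hqm
      rw [hc, ← hcu, mul_assoc, Units.mul_inv, mul_one]
  obtain ⟨m₁, hm₁⟩ := hpm
  have hpme : p = m₁ * e := by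
    apply mul_left_cancel₀ hp.ne_zero
    calc p * p = p ^ 2 := (sq p).symm
      _ = m * e := e2
      _ = p * (m₁ * e) := by rw [hm₁]; ring
  rcases hp.irreducible.isUnit_or_isUnit hpme with hu | hu
  · -- Case A: `m₁` is a unit, so the norm of `ζ` is `p` up to a unit.
    have hpm₁ : ¬ p ∣ m₁ := fun hd => hp.not_unit (isUnit_of_dvd_unit hd hu)
    have hζz : ζ ∣ z * sigmaS n z := by
      rw [h]
      exact Dvd.dvd.mul_left (hζP.trans (dvd_pow_self _ two_ne_zero)) _
    obtain ⟨Z, hZζ, hZN⟩ : ∃ Z, ζ ∣ Z ∧ Z * sigmaS n Z = iotaS n s * iotaS n p ^ 2 := by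
      rcases hζ.2.2 _ _ hζz with h1 | h2
      · exact ⟨z, h1, h⟩
      · exact ⟨sigmaS n z, h2, by rw [sigmaS_sigmaS, mul_comm]; exact h⟩
    obtain ⟨y, rfl⟩ := hZζ
    obtain ⟨A', B', hydec, hyN⟩ := norm_decomp y
    set s₁ : MvPolynomial (Fin n) ℚ := A' ^ 2 + B' ^ 2 with hs₁
    have e3 : m * s₁ = s * p ^ 2 := by
      apply iotaS_injective
      have lhs : iotaS n (m * s₁) = (ζ * y) * sigmaS n (ζ * y) := by
        rw [RingHom.map_mul, ← hζN, ← hyN, RingHom.map_mul]; ring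
      rw [lhs, hZN, RingHom.map_mul, RingHom.map_pow]
    have e4 : m₁ * s₁ = s * p := by
      apply mul_left_cancel₀ hp.ne_zero
      linear_combination e3 - s₁ * hm₁
    have hps₁ : p ∣ s₁ := by
      have hd : p ∣ m₁ * s₁ := ⟨s, by rw [e4]; ring⟩
      rcases hp.2.2 _ _ hd with h1 | h2
      · exact absurd h1 hpm₁
      · exact h2
    obtain ⟨s₂, hs₂⟩ := hps₁
    have e5 : s = m₁ * s₂ := by
      apply mul_left_cancel₀ hp.ne_zero
      linear_combination (-1 : MvPolynomial (Fin n) ℚ) * e4 + m₁ * hs₂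
    have hζy : ζ ∣ y * sigmaS n y := by
      rw [hyN, hs₂, RingHom.map_mul]
      exact dvd_mul_of_dvd_left hζP _
    obtain ⟨Y, hYζ, hYN⟩ : ∃ Y, ζ ∣ Y ∧ Y * sigmaS n Y = iotaS n s₁ := by
      rcases hζ.2.2 _ _ hζy with h1 | h2
      · exact ⟨y, h1, hyN⟩
      · exact ⟨sigmaS n y, h2, by rw [sigmaS_sigmaS, mul_comm]; exact hyN⟩
    obtain ⟨w, rfl⟩ := hYζ
    obtain ⟨A₃, B₃, hwdec, hwN⟩ := norm_decomp w
    set s₃ : MvPolynomial (Fin n) ℚ := A₃ ^ 2 + B₃ ^ 2 with hs₃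
    have e6 : m * s₃ = s₁ := by
      apply iotaS_injective
      rw [RingHom.map_mul, ← hζN, ← hwN, ← hYN, RingHom.map_mul]
      ring
    have e7 : s = m₁ ^ 2 * s₃ := by
      have e8 : m₁ * s₃ = s₂ := by
        apply mul_left_cancel₀ hp.ne_zero
        linear_combination e6 - s₃ * hm₁ + hs₂
      rw [e5, ← e8]; ring
    refine ⟨iotaS n m₁ * w, ?_⟩
    have hrw : (iotaS n m₁ * w) * sigmaS n (iotaS n m₁ * w)
        = iotaS n m₁ ^ 2 * (w * sigmaS n w) := by
      rw [RingHom.map_mul, sigmaS_iota]; ring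
    rw [hrw, hwN, e7, RingHom.map_mul, RingHom.map_pow]
  · -- Case B: `e` is a unit, so `η` is a unit and `ι p` is prime.
    have hηu : IsUnit η :=
      isUnit_of_dvd_unit ⟨sigmaS n η, hηN.symm⟩ (hu.map (iotaS n))
    have hassoc : Associated ζ (iotaS n p) := ⟨hηu.unit, by rw [IsUnit.unit_spec, hη]⟩
    have hPprime : Prime (iotaS n p) := hassoc.prime hζ
    have hPz : iotaS n p ∣ z * sigmaS n z := by
      rw [h]
      exact Dvd.dvd.mul_left (dvd_pow_self _ two_ne_zero) _
    obtain ⟨Z, hZdvd, hZN⟩ :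
        ∃ Z, iotaS n p ∣ Z ∧ Z * sigmaS n Z = iotaS n s * iotaS n p ^ 2 := by
      rcases hPprime.2.2 _ _ hPz with h1 | h2
      · exact ⟨z, h1, h⟩
      · exact ⟨sigmaS n z, h2, by rw [sigmaS_sigmaS, mul_comm]; exact h⟩
    obtain ⟨y, rfl⟩ := hZdvd
    refine ⟨y, ?_⟩
    apply mul_left_cancel₀ (pow_ne_zero 2 hP0)
    rw [RingHom.map_mul, sigmaS_iota] at hZN
    linear_combination hZN

/-- Descent: a norm divided by the square of a nonzero polynomial is a norm. -/
lemma descent (g : MvPolynomial (Fin n) ℚ) :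
    g ≠ 0 → ∀ (z : MvPolynomial (Fin n) Kq) (t : MvPolynomial (Fin n) ℚ),
      z * sigmaS n z = iotaS n t * iotaS n g ^ 2 →
      ∃ y, y * sigmaS n y = iotaS n t := by
  induction g using UniqueFactorizationMonoid.induction_on_prime with
  | h₁ => exact fun hg => absurd rfl hg
  | h₂ x hx =>
    intro _ z t hz
    obtain ⟨u, rfl⟩ := hx
    refine ⟨z * iotaS n ↑u⁻¹, ?_⟩
    have h1 : ((u : MvPolynomial (Fin n) ℚ) * ↑u⁻¹) = 1 := u.mul_inv
    have h2 : iotaS n ↑u * iotaS n ↑u⁻¹ = 1 := by rw [← RingHom.map_mul, h1, map_one]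
    calc (z * iotaS n ↑u⁻¹) * sigmaS n (z * iotaS n ↑u⁻¹)
        = (z * sigmaS n z) * (iotaS n ↑u⁻¹ * iotaS n ↑u⁻¹) := by
          rw [RingHom.map_mul, sigmaS_iota]; ring
      _ = iotaS n t * ((iotaS n ↑u * iotaS n ↑u⁻¹) * (iotaS n ↑u * iotaS n ↑u⁻¹)) := by
          rw [hz]; ring
      _ = iotaS n t := by rw [h2]; ring
  | h₃ a p ha hp ih =>
    intro _ z t hz
    have hz' : z * sigmaS n z = iotaS n (t * a ^ 2) * iotaS n p ^ 2 := by
      rw [hz, RingHom.map_mul (iotaS n) p a, RingHom.map_mul (iotaS n) t (a ^ 2),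
        RingHom.map_pow]
      ring
    obtain ⟨y, hy⟩ := core_step hp z (t * a ^ 2) hz'
    have hy' : y * sigmaS n y = iotaS n t * iotaS n a ^ 2 := by
      rw [hy, RingHom.map_mul, RingHom.map_pow]
    exact ih ha y t hy'

theorem sum_two_squares_in_fraction_field_descends_to_polynomials (n : ℕ)
    (f : MvPolynomial (Fin n) ℚ)
    (r₁ r₂ : FractionRing (MvPolynomial (Fin n) ℚ))
    (hf : algebraMap (MvPolynomial (Fin n) ℚ) (FractionRing (MvPolynomial (Fin n) ℚ)) f
      = r₁ ^ 2 + r₂ ^ 2) :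
    ∃ q₁ q₂ : MvPolynomial (Fin n) ℚ, f = q₁ ^ 2 + q₂ ^ 2 := by
  obtain ⟨a₁, d₁, hd₁, he₁⟩ := IsFractionRing.div_surjective (A := MvPolynomial (Fin n) ℚ) r₁
  obtain ⟨a₂, d₂, hd₂, he₂⟩ := IsFractionRing.div_surjective (A := MvPolynomial (Fin n) ℚ) r₂
  have hd₁0 : d₁ ≠ 0 := nonZeroDivisors.ne_zero hd₁
  have hd₂0 : d₂ ≠ 0 := nonZeroDivisors.ne_zero hd₂
  have hφ1 : algebraMap (MvPolynomial (Fin n) ℚ) (FractionRing (MvPolynomial (Fin n) ℚ)) d₁ ≠ 0 :=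
    IsFractionRing.to_map_ne_zero_of_mem_nonZeroDivisors hd₁
  have hφ2 : algebraMap (MvPolynomial (Fin n) ℚ) (FractionRing (MvPolynomial (Fin n) ℚ)) d₂ ≠ 0 :=
    IsFractionRing.to_map_ne_zero_of_mem_nonZeroDivisors hd₂
  have key : f * (d₁ * d₂) ^ 2 = (a₁ * d₂) ^ 2 + (a₂ * d₁) ^ 2 := by
    apply IsFractionRing.injective (MvPolynomial (Fin n) ℚ)
      (FractionRing (MvPolynomial (Fin n) ℚ))
    rw [map_mul, map_pow, map_add, map_pow, map_pow, map_mul, map_mul, map_mul]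
    rw [hf, ← he₁, ← he₂]
    field_simp
  have hg0 : d₁ * d₂ ≠ 0 := mul_ne_zero hd₁0 hd₂0
  have hz : (iotaS n (a₁ * d₂) + JS n * iotaS n (a₂ * d₁)) *
      sigmaS n (iotaS n (a₁ * d₂) + JS n * iotaS n (a₂ * d₁))
      = iotaS n f * iotaS n (d₁ * d₂) ^ 2 := by
    rw [norm_of_decomp, ← key, RingHom.map_mul, RingHom.map_pow]
  obtain ⟨y, hy⟩ := descent (d₁ * d₂) hg0 _ f hz
  obtain ⟨Q₁, Q₂, hQdec, hQN⟩ := norm_decomp y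
  exact ⟨Q₁, Q₂, iotaS_injective (hy.symm.trans hQN)⟩
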